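/- Let N ≥ 1 and let P, D, H ∈ ℝ^{N×N} satisfy: P is symmetric with P² = P (an orthogonal projection); D is diagonal with strictly positive diagonal entries and DP = PD; H is symmetric with P H P = H. If H has a strictly positive eigenvalue, then the matrix DH + P has a real eigenvalue strictly greater than 1; in particular DH + P has an eigenvalue of modulus strictly greater than 1. -/

import Mathlib

open scoped BigOperators

open Matrix in
/-- Auxiliary: a real symmetric matrix whose quadratic form takes a positive value
has a positive eigenvalue. -/
lemma aux_pos_eigen {N : ℕ} {M : Matrix (Fin N) (Fin N) ℝ} (hM : M.IsHermitian)
    (y : Fin N → ℝ) (hy : 0 < y ⬝ᵥ M.mulVec y) :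
    ∃ t : ℝ, 0 < t ∧ ∃ e : Fin N → ℝ, e ≠ 0 ∧ M.mulVec e = t • e := by
  by_contra hcon
  push_neg at hcon
  have hle : ∀ i, hM.eigenvalues i ≤ 0 := by
    intro i
    by_contra hi
    push_neg at hi
    exact (hcon _ hi _ ((WithLp.ofLp_eq_zero (p := 2)).not.mpr (hM.eigenvectorBasis.orthonormal.ne_zero i))
      (hM.mulVec_eigenvectorBasis i)).elim
  -- show -M is PosSemidef
  have hspec := hM.spectral_theorem
  have hneg : (-M).PosSemidef := by
    have hd : (Matrix.diagonal (fun i => -hM.eigenvalues i)).PosSemidef :=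
      Matrix.PosSemidef.diagonal (fun i => by simpa using hle i)
    have h2 := hd.mul_mul_conjTranspose_same (hM.eigenvectorUnitary : Matrix (Fin N) (Fin N) ℝ)
    have heq : (hM.eigenvectorUnitary : Matrix (Fin N) (Fin N) ℝ) *
        Matrix.diagonal (fun i => -hM.eigenvalues i) *
        (hM.eigenvectorUnitary : Matrix (Fin N) (Fin N) ℝ)ᴴ = -M := by
      have : Matrix.diagonal (fun i => -hM.eigenvalues i) =
          -(Matrix.diagonal (RCLike.ofReal ∘ hM.eigenvalues) : Matrix (Fin N) (Fin N) ℝ) := by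
        rw [← Matrix.diagonal_neg]
        congr 1
      rw [Unitary.conjStarAlgAut_apply, Matrix.star_eq_conjTranspose] at hspec
      rw [this, Matrix.mul_neg, Matrix.neg_mul, neg_inj]
      exact hspec.symm
    rwa [heq] at h2
  have := hneg.re_dotProduct_nonneg y
  simp only [RCLike.re_to_real, Matrix.star_eq_conjTranspose] at this
  have : 0 ≤ y ⬝ᵥ (-M).mulVec y := by simpa using this
  rw [Matrix.neg_mulVec, dotProduct_neg] at this
  linarith

/-- instability transfer lemma. If `P` is a symmetric projection, `D` a
positive diagonal matrix commuting with `P`, and `H` symmetric with `P H P = H` and a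
strictly positive eigenvalue, then `D H + P` has a real eigenvalue strictly greater
than `1` (in particular an eigenvalue of modulus `> 1`). -/
theorem stmt_13 (N : ℕ) (hN : 1 ≤ N)
    (P H : Matrix (Fin N) (Fin N) ℝ) (dv : Fin N → ℝ)
    (hPsym : P.IsSymm) (hP2 : P * P = P)
    (hdv : ∀ i, 0 < dv i)
    (hcomm : Matrix.diagonal dv * P = P * Matrix.diagonal dv)
    (hHsym : H.IsSymm) (hPHP : P * H * P = H)
    (hpos : ∃ μ : ℝ, 0 < μ ∧ ∃ w : Fin N → ℝ, w ≠ 0 ∧ H.mulVec w = μ • w) :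
    ∃ lam : ℝ, 1 < lam ∧ ∃ v : Fin N → ℝ, v ≠ 0 ∧
      (Matrix.diagonal dv * H + P).mulVec v = lam • v := by
  open Matrix in
  obtain ⟨μ, hμ, w, hw, hHw⟩ := hpos
  set s : Fin N → ℝ := fun i => Real.sqrt (dv i) with hs
  have hspos : ∀ i, 0 < s i := fun i => Real.sqrt_pos.mpr (hdv i)
  set S : Matrix (Fin N) (Fin N) ℝ := Matrix.diagonal s with hSdef
  have hSS : S * S = Matrix.diagonal dv := by
    rw [hSdef, Matrix.diagonal_mul_diagonal]
    have : (fun i => s i * s i) = dv := funext fun i => Real.mul_self_sqrt (hdv i).le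
    rw [this]
  set M : Matrix (Fin N) (Fin N) ℝ := S * H * S with hMdef
  have hSsym : Sᵀ = S := Matrix.diagonal_transpose s
  have hMsymm : M.IsSymm := by
    show Mᵀ = M
    rw [hMdef, Matrix.transpose_mul, Matrix.transpose_mul, hSsym, hHsym.eq, ← Matrix.mul_assoc]
  have hMherm : M.IsHermitian := by
    rw [Matrix.IsHermitian, Matrix.conjTranspose_eq_transpose_of_trivial]
    exact hMsymm
  -- quadratic form positive at y with S y = w
  set y : Fin N → ℝ := fun i => w i / s i with hy
  have hSy : S.mulVec y = w := by
    funext i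
    simp [hSdef, Matrix.mulVec_diagonal, hy, mul_div_cancel₀ _ (hspos i).ne']
  have hquad : 0 < y ⬝ᵥ M.mulVec y := by
    have hMy : M.mulVec y = S.mulVec (μ • w) := by
      rw [hMdef, ← Matrix.mulVec_mulVec, ← Matrix.mulVec_mulVec, hSy, hHw]
    rw [hMy]
    have : y ⬝ᵥ S.mulVec (μ • w) = μ * ∑ i, w i ^ 2 := by
      simp only [dotProduct, hSdef, Matrix.mulVec_diagonal, hy, Pi.smul_apply,
        smul_eq_mul]
      rw [Finset.mul_sum]
      congr 1
      funext i
      have hsi := (hspos i).ne'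
      field_simp
    rw [this]
    apply mul_pos hμ
    have : ∃ i, w i ≠ 0 := by
      by_contra hc
      push_neg at hc
      exact hw (funext hc)
    obtain ⟨i, hi⟩ := this
    apply Finset.sum_pos' (fun j _ => sq_nonneg _) ⟨i, Finset.mem_univ i, by positivity⟩
  obtain ⟨t, ht, e, he, hMe⟩ := aux_pos_eigen hMherm y hquad
  -- v = S e
  set v : Fin N → ℝ := S.mulVec e with hv
  have hvne : v ≠ 0 := by
    intro hc
    apply he
    funext i
    have := congrFun hc i
    simp only [hv, hSdef, Matrix.mulVec_diagonal, Pi.zero_apply] at this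
    have := mul_eq_zero.mp this
    rcases this with h | h
    · exact ((hspos i).ne' h).elim
    · exact h
  have hfactor : Matrix.diagonal dv * H * S = S * M := by
    rw [← hSS, hMdef]
    noncomm_ring
  have hDHv : (Matrix.diagonal dv * H).mulVec v = t • v := by
    rw [hv, Matrix.mulVec_mulVec, hfactor, ← Matrix.mulVec_mulVec, hMe, Matrix.mulVec_smul]
  have hPv : P.mulVec v = v := by
    have hfact : Matrix.diagonal dv * H = P * (Matrix.diagonal dv * H * P) := by
      conv_lhs => rw [← hPHP]
      rw [show Matrix.diagonal dv * (P * H * P) = (Matrix.diagonal dv * P) * (H * P) from by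
        noncomm_ring, hcomm]
      noncomm_ring
    have h1 : t • v = P.mulVec ((Matrix.diagonal dv * H * P).mulVec v) := by
      rw [Matrix.mulVec_mulVec, ← hfact, hDHv]
    have h2 : P.mulVec (t • v) = t • v := by
      rw [h1, Matrix.mulVec_mulVec, hP2, ← h1]
    rw [Matrix.mulVec_smul] at h2
    have := smul_right_injective (Fin N → ℝ) ht.ne' h2
    exact this
  refine ⟨t + 1, by linarith, v, hvne, ?_⟩
  rw [Matrix.add_mulVec, hDHv, hPv, add_smul, one_smul]
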